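/- Let X₃ = ∂_β, X₄ = -sin β ∂_α + ℓ cos β (cos α ∂_x + sin α ∂_y), X₂ = [X₃, X₄], and X₁ = [X₄, X₂]. Then at every point, X₁ ∧ X₂ ∧ X₃ ∧ X₄ = ℓ² ∂_x ∧ ∂_y ∧ ∂_α ∧ ∂_β ≠ 0; in particular (X₁, X₂, X₃, X₄) form a frame of the tangent bundle. -/

import Mathlib

/- Configuration space of the car: M = ℝ⁴ with coordinates
   (x, y, α, β) = (p 0, p 1, p 2, p 3). -/
abbrev Pt : Type := Fin 4 → ℝ
abbrev VF : Type := Pt → Pt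

/-- Lie bracket of vector fields on ℝ⁴. -/
noncomputable def lieBracket (X Y : VF) : VF :=
  fun p => fderiv ℝ Y p (X p) - fderiv ℝ X p (Y p)

/-- X₃ = ∂_β -/
noncomputable def X3 : VF := fun _ => ![0, 0, 0, 1]

/-- X₄ = -sin β ∂_α + ℓ cos β (cos α ∂_x + sin α ∂_y) -/
noncomputable def X4 (ℓ : ℝ) : VF :=
  fun p => ![ℓ * Real.cos (p 3) * Real.cos (p 2),
             ℓ * Real.cos (p 3) * Real.sin (p 2),
             -Real.sin (p 3), 0]

/-- X₂ = [X₃, X₄] -/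
noncomputable def X2 (ℓ : ℝ) : VF := lieBracket X3 (X4 ℓ)
/-- X₁ = [X₄, X₂] -/
noncomputable def X1 (ℓ : ℝ) : VF := lieBracket (X4 ℓ) (X2 ℓ)

/-- standard coordinate vector fields ∂_x, ∂_y, ∂_α, ∂_β as constant vectors -/
noncomputable def coordVec (i : Fin 4) : Pt := Pi.single i 1

/-! ### Auxiliary machinery -/

lemma coord_fderiv (f : VF) (p v : Pt) (i : Fin 4) (hf : DifferentiableAt ℝ f p) :
    fderiv ℝ f p v i = fderiv ℝ (fun q => f q i) p v := by
  have h := ((ContinuousLinearMap.proj i : Pt →L[ℝ] ℝ).hasFDerivAt (x := f p)).comp p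
    hf.hasFDerivAt
  have h2 : HasFDerivAt (fun q => f q i) ((ContinuousLinearMap.proj i).comp (fderiv ℝ f p)) p := h
  rw [h2.fderiv]
  rfl

lemma hproj (i : Fin 4) (p : Pt) :
    HasFDerivAt (fun q : Pt => q i) (ContinuousLinearMap.proj i : Pt →L[ℝ] ℝ) p :=
  (ContinuousLinearMap.proj i : Pt →L[ℝ] ℝ).hasFDerivAt

lemma prod4 (a b c d : Pt) :
    ExteriorAlgebra.ι ℝ a * ExteriorAlgebra.ι ℝ b * ExteriorAlgebra.ι ℝ c *
      ExteriorAlgebra.ι ℝ d = ExteriorAlgebra.ιMulti ℝ 4 ![a, b, c, d] := by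
  rw [ExteriorAlgebra.ιMulti_apply]
  simp [List.ofFn_succ, mul_assoc]

lemma alt_eq_det_smul {N : Type*} [AddCommGroup N] [Module ℝ N]
    (f : Pt [⋀^Fin 4]→ₗ[ℝ] N) (e : Module.Basis (Fin 4) ℝ Pt) (v : Fin 4 → Pt) :
    f v = e.det v • f e := by
  have hf : f = (e.det).smulRight (f e) := by
    refine Module.Basis.ext_alternating e fun i h => ?_
    let σ : Equiv.Perm (Fin 4) := Equiv.ofBijective i (Finite.injective_iff_bijective.1 h)
    change f (⇑e ∘ σ) = (e.det).smulRight (f e) (⇑e ∘ σ)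
    rw [AlternatingMap.map_perm, AlternatingMap.smulRight_apply, AlternatingMap.map_perm,
      Module.Basis.det_self]
    rcases Int.units_eq_one_or (Equiv.Perm.sign σ) with h1 | h1 <;> simp [h1]
  rw [hf]
  simp [Module.Basis.det_self]

/-- a family of alternating forms used to detect the degree-4 component -/
noncomputable def detG : ∀ n, Pt [⋀^Fin n]→ₗ[ℝ] ℝ := fun n =>
  match n with
  | 4 => (Pi.basisFun ℝ (Fin 4)).det
  | _ => 0

lemma basis_wedge_ne_zero :
    ExteriorAlgebra.ιMulti ℝ 4 (⇑(Pi.basisFun ℝ (Fin 4))) ≠ 0 := by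
  intro h0
  have h := congrArg (ExteriorAlgebra.liftAlternating detG) h0
  rw [ExteriorAlgebra.liftAlternating_apply_ιMulti, map_zero] at h
  have h' : (Pi.basisFun ℝ (Fin 4)).det ⇑(Pi.basisFun ℝ (Fin 4)) = 0 := h
  rw [Module.Basis.det_self] at h'
  exact one_ne_zero h'

lemma det_fin_four (A : Matrix (Fin 4) (Fin 4) ℝ) : A.det =
    A 0 0 * (A 1 1 * (A 2 2 * A 3 3 - A 2 3 * A 3 2) - A 1 2 * (A 2 1 * A 3 3 - A 2 3 * A 3 1)
      + A 1 3 * (A 2 1 * A 3 2 - A 2 2 * A 3 1))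
    - A 0 1 * (A 1 0 * (A 2 2 * A 3 3 - A 2 3 * A 3 2) - A 1 2 * (A 2 0 * A 3 3 - A 2 3 * A 3 0)
      + A 1 3 * (A 2 0 * A 3 2 - A 2 2 * A 3 0))
    + A 0 2 * (A 1 0 * (A 2 1 * A 3 3 - A 2 3 * A 3 1) - A 1 1 * (A 2 0 * A 3 3 - A 2 3 * A 3 0)
      + A 1 3 * (A 2 0 * A 3 1 - A 2 1 * A 3 0))
    - A 0 3 * (A 1 0 * (A 2 1 * A 3 2 - A 2 2 * A 3 1) - A 1 1 * (A 2 0 * A 3 2 - A 2 2 * A 3 0)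
      + A 1 2 * (A 2 0 * A 3 1 - A 2 1 * A 3 0)) := by
  have h1 : (Fin.succ 2 : Fin 4) = 3 := rfl
  have h2 : ((3 : Fin 4) : ℕ) = 3 := rfl
  have h3 : ((2 : Fin 4) : ℕ) = 2 := rfl
  have h4 : ((1 : Fin 4) : ℕ) = 1 := rfl
  have h5 : ((0 : Fin 4) : ℕ) = 0 := rfl
  have h6 : (Fin.castSucc 2 : Fin 4) = 2 := rfl
  rw [Matrix.det_succ_row_zero, Fin.sum_univ_four]
  norm_num [Matrix.det_fin_three, Matrix.submatrix_apply, Fin.succAbove, Fin.lt_def,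
    h1, h2, h3, h4, h5, h6]
  ring

/-! ### Explicit computation of the brackets -/

lemma diffX4 (ℓ : ℝ) (p : Pt) : DifferentiableAt ℝ (X4 ℓ) p := by
  refine differentiableAt_pi.2 fun i => ?_
  fin_cases i
  · exact ((((hproj 3 p).cos.const_mul ℓ).mul (hproj 2 p).cos).differentiableAt : _)
  · exact ((((hproj 3 p).cos.const_mul ℓ).mul (hproj 2 p).sin).differentiableAt : _)
  · exact (((hproj 3 p).sin.neg).differentiableAt : _)
  · exact (differentiableAt_const (0:ℝ) : DifferentiableAt ℝ (fun _ : Pt => (0:ℝ)) p)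

lemma fderiv_X4_apply (ℓ : ℝ) (p v : Pt) :
    fderiv ℝ (X4 ℓ) p v =
      ![-(ℓ * Real.sin (p 3) * Real.cos (p 2)) * v 3 - ℓ * Real.cos (p 3) * Real.sin (p 2) * v 2,
        -(ℓ * Real.sin (p 3) * Real.sin (p 2)) * v 3 + ℓ * Real.cos (p 3) * Real.cos (p 2) * v 2,
        -(Real.cos (p 3) * v 3), 0] := by
  funext i
  rw [coord_fderiv _ _ _ _ (diffX4 ℓ p)]
  fin_cases i
  · show fderiv ℝ (fun q : Pt => ℓ * Real.cos (q 3) * Real.cos (q 2)) p v =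
      -(ℓ * Real.sin (p 3) * Real.cos (p 2)) * v 3 - ℓ * Real.cos (p 3) * Real.sin (p 2) * v 2
    rw [HasFDerivAt.fderiv (f := fun q : Pt => ℓ * Real.cos (q 3) * Real.cos (q 2)) (((hproj 3 p).cos.const_mul ℓ).mul (hproj 2 p).cos)]
    simp; ring
  · show fderiv ℝ (fun q : Pt => ℓ * Real.cos (q 3) * Real.sin (q 2)) p v =
      -(ℓ * Real.sin (p 3) * Real.sin (p 2)) * v 3 + ℓ * Real.cos (p 3) * Real.cos (p 2) * v 2
    rw [HasFDerivAt.fderiv (f := fun q : Pt => ℓ * Real.cos (q 3) * Real.sin (q 2)) (((hproj 3 p).cos.const_mul ℓ).mul (hproj 2 p).sin)]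
    simp; ring
  · show fderiv ℝ (fun q : Pt => -Real.sin (q 3)) p v = -(Real.cos (p 3) * v 3)
    rw [HasFDerivAt.fderiv (f := fun q : Pt => -Real.sin (q 3)) ((hproj 3 p).sin.neg)]
    simp
  · show fderiv ℝ (fun _ : Pt => (0:ℝ)) p v = 0
    rw [fderiv_const_apply]
    simp

/-- the explicit form of X₂ -/
noncomputable def Y2 (ℓ : ℝ) : VF := fun p =>
  ![-(ℓ * Real.sin (p 3) * Real.cos (p 2)), -(ℓ * Real.sin (p 3) * Real.sin (p 2)),
    -Real.cos (p 3), 0]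

lemma X2_eq (ℓ : ℝ) : X2 ℓ = Y2 ℓ := by
  funext p
  show fderiv ℝ (X4 ℓ) p (X3 p) - fderiv ℝ X3 p (X4 ℓ p) = Y2 ℓ p
  have hc : fderiv ℝ X3 p = 0 := fderiv_const_apply _
  rw [hc, fderiv_X4_apply]
  funext i
  fin_cases i <;> simp [X3, Y2]

lemma diffY2 (ℓ : ℝ) (p : Pt) : DifferentiableAt ℝ (Y2 ℓ) p := by
  refine differentiableAt_pi.2 fun i => ?_
  fin_cases i
  · exact (((((hproj 3 p).sin.const_mul ℓ).mul (hproj 2 p).cos).neg.differentiableAt) : _)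
  · exact (((((hproj 3 p).sin.const_mul ℓ).mul (hproj 2 p).sin).neg.differentiableAt) : _)
  · exact (((hproj 3 p).cos.neg).differentiableAt : _)
  · exact (differentiableAt_const (0:ℝ) : DifferentiableAt ℝ (fun _ : Pt => (0:ℝ)) p)

lemma fderiv_Y2_apply (ℓ : ℝ) (p v : Pt) :
    fderiv ℝ (Y2 ℓ) p v =
      ![-(ℓ * Real.cos (p 3) * Real.cos (p 2)) * v 3 + ℓ * Real.sin (p 3) * Real.sin (p 2) * v 2,
        -(ℓ * Real.cos (p 3) * Real.sin (p 2)) * v 3 - ℓ * Real.sin (p 3) * Real.cos (p 2) * v 2,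
        Real.sin (p 3) * v 3, 0] := by
  funext i
  rw [coord_fderiv _ _ _ _ (diffY2 ℓ p)]
  fin_cases i
  · show fderiv ℝ (fun q : Pt => -(ℓ * Real.sin (q 3) * Real.cos (q 2))) p v =
      -(ℓ * Real.cos (p 3) * Real.cos (p 2)) * v 3 + ℓ * Real.sin (p 3) * Real.sin (p 2) * v 2
    rw [HasFDerivAt.fderiv (f := fun q : Pt => -(ℓ * Real.sin (q 3) * Real.cos (q 2))) ((((hproj 3 p).sin.const_mul ℓ).mul (hproj 2 p).cos).neg)]
    simp; ring
  · show fderiv ℝ (fun q : Pt => -(ℓ * Real.sin (q 3) * Real.sin (q 2))) p v =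
      -(ℓ * Real.cos (p 3) * Real.sin (p 2)) * v 3 - ℓ * Real.sin (p 3) * Real.cos (p 2) * v 2
    rw [HasFDerivAt.fderiv (f := fun q : Pt => -(ℓ * Real.sin (q 3) * Real.sin (q 2))) ((((hproj 3 p).sin.const_mul ℓ).mul (hproj 2 p).sin).neg)]
    simp; ring
  · show fderiv ℝ (fun q : Pt => -Real.cos (q 3)) p v = Real.sin (p 3) * v 3
    rw [HasFDerivAt.fderiv (f := fun q : Pt => -Real.cos (q 3)) ((hproj 3 p).cos.neg)]
    simp
  · show fderiv ℝ (fun _ : Pt => (0:ℝ)) p v = 0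
    rw [fderiv_const_apply]
    simp

/-- the explicit form of X₁ -/
noncomputable def Y1 (ℓ : ℝ) : VF := fun p =>
  ![-(ℓ * Real.sin (p 2)), ℓ * Real.cos (p 2), 0, 0]

lemma X1_eq (ℓ : ℝ) : X1 ℓ = Y1 ℓ := by
  funext p
  show fderiv ℝ (X2 ℓ) p (X4 ℓ p) - fderiv ℝ (X4 ℓ) p (X2 ℓ p) = Y1 ℓ p
  rw [X2_eq, fderiv_Y2_apply, fderiv_X4_apply]
  funext i
  fin_cases i
  · simp only [Pi.sub_apply, Matrix.cons_val_zero, X4, Y2, Y1, Matrix.cons_val_two,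
      Matrix.tail_cons, Matrix.head_cons, Matrix.cons_val_three]
    simp [X4, Y2, Y1]
    linear_combination (-(ℓ * Real.sin (p 2))) * Real.sin_sq_add_cos_sq (p 3)
  · simp [X4, Y2, Y1]
    linear_combination (ℓ * Real.cos (p 2)) * Real.sin_sq_add_cos_sq (p 3)
  · simp [X4, Y2, Y1]
  · simp [X4, Y2, Y1]

open ExteriorAlgebra in
/-- at every point, X₁ ∧ X₂ ∧ X₃ ∧ X₄ = ℓ² ∂_x ∧ ∂_y ∧ ∂_α ∧ ∂_β ≠ 0,
    and (X₁, X₂, X₃, X₄) is a frame (pointwise linearly independent). -/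
theorem car_frame (ℓ : ℝ) (hℓ : 0 < ℓ) : ∀ p : Pt,
    ι ℝ (X1 ℓ p) * ι ℝ (X2 ℓ p) * ι ℝ (X3 p) * ι ℝ (X4 ℓ p) =
      (ℓ ^ 2) • (ι ℝ (coordVec 0) * ι ℝ (coordVec 1) * ι ℝ (coordVec 2) * ι ℝ (coordVec 3)
        : ExteriorAlgebra ℝ Pt) ∧
    ι ℝ (X1 ℓ p) * ι ℝ (X2 ℓ p) * ι ℝ (X3 p) * ι ℝ (X4 ℓ p) ≠ (0 : ExteriorAlgebra ℝ Pt) ∧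
    LinearIndependent ℝ ![X1 ℓ p, X2 ℓ p, X3 p, X4 ℓ p] := by
  intro p
  set e := Pi.basisFun ℝ (Fin 4) with he
  have h1 : X1 ℓ p = Y1 ℓ p := by rw [X1_eq]
  have h2 : X2 ℓ p = Y2 ℓ p := by rw [X2_eq]
  -- the matrix of the frame
  have hdetA : Matrix.det (![Y1 ℓ p, Y2 ℓ p, X3 p, X4 ℓ p] : Matrix (Fin 4) (Fin 4) ℝ)
      = ℓ ^ 2 := by
    refine (det_fin_four _).trans ?_
    simp [Y1, Y2, X3, X4]
    linear_combination (ℓ^2 * (Real.sin (p 3)^2 + Real.cos (p 3)^2)) *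
        Real.sin_sq_add_cos_sq (p 2) + ℓ^2 * Real.sin_sq_add_cos_sq (p 3)
  have hfam : ![X1 ℓ p, X2 ℓ p, X3 p, X4 ℓ p]
      = (![Y1 ℓ p, Y2 ℓ p, X3 p, X4 ℓ p] : Matrix (Fin 4) (Fin 4) ℝ) := by
    rw [h1, h2]
  have hdet : e.det ![X1 ℓ p, X2 ℓ p, X3 p, X4 ℓ p] = ℓ ^ 2 := by
    rw [Module.Basis.det_apply]
    have hm : e.toMatrix ![X1 ℓ p, X2 ℓ p, X3 p, X4 ℓ p] =
        Matrix.transpose (![Y1 ℓ p, Y2 ℓ p, X3 p, X4 ℓ p] : Matrix (Fin 4) (Fin 4) ℝ) := by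
      ext i j
      rw [Module.Basis.toMatrix_apply]
      change _ = (![Y1 ℓ p, Y2 ℓ p, X3 p, X4 ℓ p] j) i
      rw [hfam]
      simp [he]
    rw [hm]; exact (Matrix.det_transpose _).trans hdetA
  have hcoord : ![coordVec 0, coordVec 1, coordVec 2, coordVec 3] = ⇑e := by
    funext i
    fin_cases i <;> simp [coordVec, he]
  have key : ι ℝ (X1 ℓ p) * ι ℝ (X2 ℓ p) * ι ℝ (X3 p) * ι ℝ (X4 ℓ p) =
      (ℓ ^ 2) • (ι ℝ (coordVec 0) * ι ℝ (coordVec 1) * ι ℝ (coordVec 2) * ι ℝ (coordVec 3)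
        : ExteriorAlgebra ℝ Pt) := by
    rw [prod4, prod4, hcoord,
      alt_eq_det_smul (ExteriorAlgebra.ιMulti ℝ 4) e ![X1 ℓ p, X2 ℓ p, X3 p, X4 ℓ p], hdet]
  refine ⟨key, ?_, ?_⟩
  · rw [key, prod4, hcoord]
    exact smul_ne_zero (pow_ne_zero _ hℓ.ne') basis_wedge_ne_zero
  · rw [hfam]
    refine Matrix.linearIndependent_rows_iff_isUnit.2 ?_
    refine (Matrix.isUnit_iff_isUnit_det _).2 (isUnit_iff_ne_zero.2 ?_)
    refine ne_of_eq_of_ne hdetA ?_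
    positivity
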